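/- arXiv:1812.05969 — 3 statements merged into one kernel-verified Lean document; each statement's English description precedes it below -/
import Mathlib

section
/- Let T be an invertible matrix on a finite index set and let Λ = Λ₁ ⊔ Λ₂ be a disjoint decomposition. If T_{Λ₁} and T_{Λ₂} (the restrictions of T to the blocks Λ₁ and Λ₂) are invertible, then the resolvent identity holds: T_Λ⁻¹ = (T_{Λ₁}⁻¹ + T_{Λ₂}⁻¹) − (T_{Λ₁}⁻¹ + T_{Λ₂}⁻¹)(T − T_{Λ₁} − T_{Λ₂}) T_Λ⁻¹, where T_{Λᵢ}⁻¹ is extended by zero outside its block. -/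
open Matrix

/-- Resolvent identity: for a finite index set `Λ` partitioned by a predicate `p`
into blocks `Λ₁` and `Λ₂`, if `T`, `T_{Λ₁}` and `T_{Λ₂}` are invertible, then
`T⁻¹ = (T_{Λ₁}⁻¹ + T_{Λ₂}⁻¹) − (T_{Λ₁}⁻¹ + T_{Λ₂}⁻¹)(T − T_{Λ₁} − T_{Λ₂}) T⁻¹`,
where restricted matrices and their inverses are extended by zero off their blocks. -/
theorem resolvent_identity {Λ : Type*} [Fintype Λ] [DecidableEq Λ]
    (T : Matrix Λ Λ ℂ) (p : Λ → Prop) [DecidablePred p]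
    -- the two block restrictions, as matrices on the subtypes
    (T₁ : Matrix {m : Λ // p m} {m : Λ // p m} ℂ)
    (T₂ : Matrix {m : Λ // ¬ p m} {m : Λ // ¬ p m} ℂ)
    (hT₁ : T₁ = T.submatrix Subtype.val Subtype.val)
    (hT₂ : T₂ = T.submatrix Subtype.val Subtype.val)
    -- zero-extensions to matrices on Λ of the restrictions and of their inverses
    (R₁ R₂ E₁ E₂ : Matrix Λ Λ ℂ)
    (hR₁ : R₁ = fun m m' => if h : p m then (if h' : p m' then T₁ ⟨m, h⟩ ⟨m', h'⟩ else 0) else 0)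
    (hR₂ : R₂ = fun m m' => if h : ¬ p m then (if h' : ¬ p m' then T₂ ⟨m, h⟩ ⟨m', h'⟩ else 0) else 0)
    (hE₁ : E₁ = fun m m' => if h : p m then (if h' : p m' then T₁⁻¹ ⟨m, h⟩ ⟨m', h'⟩ else 0) else 0)
    (hE₂ : E₂ = fun m m' => if h : ¬ p m then (if h' : ¬ p m' then T₂⁻¹ ⟨m, h⟩ ⟨m', h'⟩ else 0) else 0)
    (hT : IsUnit T.det) (h₁ : IsUnit T₁.det) (h₂ : IsUnit T₂.det) :
    T⁻¹ = (E₁ + E₂) - (E₁ + E₂) * (T - R₁ - R₂) * T⁻¹ := by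
  have hinv₁ : T₁⁻¹ * T₁ = 1 := nonsing_inv_mul T₁ h₁
  have hinv₂ : T₂⁻¹ * T₂ = 1 := nonsing_inv_mul T₂ h₂
  have key : (E₁ + E₂) * (R₁ + R₂) = 1 := by
    ext i j
    rw [Matrix.mul_apply]
    rw [← Fintype.sum_subtype_add_sum_subtype p
      (fun k => (E₁ + E₂) i k * (R₁ + R₂) k j)]
    by_cases hi : p i
    · by_cases hj : p j
      · have h1 : (∑ k : {x // p x}, (E₁ + E₂) i k * (R₁ + R₂) k j)
            = (T₁⁻¹ * T₁) ⟨i, hi⟩ ⟨j, hj⟩ := by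
          rw [Matrix.mul_apply]
          apply Finset.sum_congr rfl
          intro k _
          rw [Matrix.add_apply, Matrix.add_apply]; simp [hE₁, hE₂, hR₁, hR₂, hi, hj, k.2]
        have h2 : (∑ k : {x // ¬ p x}, (E₁ + E₂) i k * (R₁ + R₂) k j) = 0 := by
          apply Finset.sum_eq_zero
          intro k _
          rw [Matrix.add_apply, Matrix.add_apply]; simp [hE₁, hE₂, hR₁, hR₂, hi, hj, k.2]
        rw [h1, h2, hinv₁, add_zero, Matrix.one_apply, Matrix.one_apply]
        simp [Subtype.ext_iff]
      · have h1 : (∑ k : {x // p x}, (E₁ + E₂) i k * (R₁ + R₂) k j) = 0 := by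
          apply Finset.sum_eq_zero; intro k _
          rw [Matrix.add_apply, Matrix.add_apply]; simp [hE₁, hE₂, hR₁, hR₂, hi, hj, k.2]
        have h2 : (∑ k : {x // ¬ p x}, (E₁ + E₂) i k * (R₁ + R₂) k j) = 0 := by
          apply Finset.sum_eq_zero; intro k _
          rw [Matrix.add_apply, Matrix.add_apply]; simp [hE₁, hE₂, hR₁, hR₂, hi, hj, k.2]
        rw [h1, h2, Matrix.one_apply]
        have : i ≠ j := fun h => hj (h ▸ hi)
        simp [this]
    · by_cases hj : p j
      · have h1 : (∑ k : {x // p x}, (E₁ + E₂) i k * (R₁ + R₂) k j) = 0 := by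
          apply Finset.sum_eq_zero; intro k _
          rw [Matrix.add_apply, Matrix.add_apply]; simp [hE₁, hE₂, hR₁, hR₂, hi, hj, k.2]
        have h2 : (∑ k : {x // ¬ p x}, (E₁ + E₂) i k * (R₁ + R₂) k j) = 0 := by
          apply Finset.sum_eq_zero; intro k _
          rw [Matrix.add_apply, Matrix.add_apply]; simp [hE₁, hE₂, hR₁, hR₂, hi, hj, k.2]
        rw [h1, h2, Matrix.one_apply]
        have : i ≠ j := fun h => hi (h ▸ hj)
        simp [this]
      · have h1 : (∑ k : {x // p x}, (E₁ + E₂) i k * (R₁ + R₂) k j) = 0 := by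
          apply Finset.sum_eq_zero; intro k _
          rw [Matrix.add_apply, Matrix.add_apply]; simp [hE₁, hE₂, hR₁, hR₂, hi, hj, k.2]
        have h2 : (∑ k : {x // ¬ p x}, (E₁ + E₂) i k * (R₁ + R₂) k j)
            = (T₂⁻¹ * T₂) ⟨i, hi⟩ ⟨j, hj⟩ := by
          rw [Matrix.mul_apply]
          apply Finset.sum_congr rfl
          intro k _
          rw [Matrix.add_apply, Matrix.add_apply]; simp [hE₁, hE₂, hR₁, hR₂, hi, hj, k.2]
        rw [h1, h2, hinv₂, zero_add, Matrix.one_apply, Matrix.one_apply]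
        simp [Subtype.ext_iff]
  have hTT : T * T⁻¹ = 1 := mul_nonsing_inv T hT
  have expand : (E₁ + E₂) * (T - R₁ - R₂) * T⁻¹
      = (E₁ + E₂) - T⁻¹ := by
    have : T - R₁ - R₂ = T - (R₁ + R₂) := by rw [sub_sub]
    rw [this, Matrix.mul_sub, Matrix.sub_mul, key, Matrix.one_mul,
      Matrix.mul_assoc, hTT, Matrix.mul_one]
  rw [expand]
  abel
end

section
/- Fix distinct positive reals λ₁ < λ₂ < ⋯ < λ_n, a frequency ω ∈ ℝ^d satisfying the Melnikov condition |⟨k,ω⟩ + μ'λ_{j'} − μλ_j| ≥ γ/|k|^{10d} for all nonzero k ∈ ℤ^d with |k| ≤ 10 N₀ and all μ, μ' ∈ {−1, 1}, 1 ≤ j, j' ≤ n, and a real σ. Suppose 0 < ε₁ < (1/100) min{1, λ_j, |λ_j − λ_{j'}| : j ≠ j'} and 10 ε₁ < γ/(10 N₀)^{10d}. Then the set Ω₂ = { (μ, j, k) : μ ∈ {−1,1}, 1 ≤ j ≤ n, k ∈ Λ₀, |σ + ⟨k,ω⟩ + μλ_j| < ε₁ } has at most one element, where Λ₀ ⊂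 ℤ^d is any set of diameter at most 10 N₀. -/
/-- The pairing `⟨k, ω⟩` between a lattice point and a real vector. -/
def zdot {d : ℕ} (k : Fin d → ℤ) (ω : Fin d → ℝ) : ℝ := ∑ i, (k i : ℝ) * ω i

lemma zdot_sub {d : ℕ} (k k' : Fin d → ℤ) (ω : Fin d → ℝ) :
    zdot (k - k') ω = zdot k ω - zdot k' ω := by
  simp [zdot, ← Finset.sum_sub_distrib, sub_mul]

/-- Under the Melnikov condition and the smallness conditions on `ε₁`, the set of
singular sites `(μ, j, k)` with `k` in a set `Λ₀` of diameter at most `10 N₀` has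
at most one element. -/
theorem singular_sites_subsingleton {d n : ℕ} (lam : Fin n → ℝ)
    (hpos : ∀ j, 0 < lam j) (hmono : StrictMono lam)
    (ω : Fin d → ℝ) (σ γ : ℝ) (hγ : 0 < γ) (N₀ : ℕ) (hN₀ : 1 ≤ N₀)
    (ε₁ : ℝ) (hε₁pos : 0 < ε₁)
    (Λ₀ : Set (Fin d → ℤ))
    (hdiam : ∀ k ∈ Λ₀, ∀ k' ∈ Λ₀, ‖k - k'‖ ≤ 10 * N₀)
    (hMel : ∀ k : Fin d → ℤ, k ≠ 0 → ‖k‖ ≤ 10 * N₀ →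
      ∀ μ μ' : ℝ, (μ = 1 ∨ μ = -1) → (μ' = 1 ∨ μ' = -1) → ∀ j j' : Fin n,
        γ / ‖k‖ ^ (10 * d) ≤ |zdot k ω + μ' * lam j' - μ * lam j|)
    (hε₁a : ε₁ < 1 / 100)
    (hε₁b : ∀ j, ε₁ < lam j / 100)
    (hε₁c : ∀ j j', j ≠ j' → ε₁ < |lam j - lam j'| / 100)
    (hε₁d : 10 * ε₁ < γ / (10 * (N₀ : ℝ)) ^ (10 * d)) :
    Set.Subsingleton {t : ℝ × Fin n × (Fin d → ℤ) |
      (t.1 = 1 ∨ t.1 = -1) ∧ t.2.2 ∈ Λ₀ ∧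
        |σ + zdot t.2.2 ω + t.1 * lam t.2.1| < ε₁} := by
  rintro ⟨μ, j, k⟩ ⟨hμ, hk, hsmall⟩ ⟨μ', j', k'⟩ ⟨hμ', hk', hsmall'⟩
  simp only at *
  -- key estimate
  have key : |zdot (k - k') ω + μ * lam j - μ' * lam j'| < 2 * ε₁ := by
    rw [zdot_sub]
    have := abs_sub (σ + zdot k ω + μ * lam j) (σ + zdot k' ω + μ' * lam j')
    calc |zdot k ω - zdot k' ω + μ * lam j - μ' * lam j'|
        = |(σ + zdot k ω + μ * lam j) - (σ + zdot k' ω + μ' * lam j')| := by ring_nf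
      _ ≤ |σ + zdot k ω + μ * lam j| + |σ + zdot k' ω + μ' * lam j'| := abs_sub _ _
      _ < 2 * ε₁ := by linarith
  by_cases hkk : k = k'
  · subst hkk
    have hz : zdot (k - k) ω = 0 := by rw [zdot_sub]; ring
    rw [hz, zero_add] at key
    -- now |μ λ_j - μ' λ_{j'}| < 2 ε₁
    have hjj : j = j' ∧ μ = μ' := by
      rcases hμ with rfl | rfl <;> rcases hμ' with rfl | rfl
      · refine ⟨?_, rfl⟩
        by_contra hne
        have := hε₁c j j' hne
        simp only [one_mul] at key
        linarith [abs_nonneg (lam j - lam j')]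
      · exfalso
        have h1 := hε₁b j
        have h2 := (hpos j').le
        have : |1 * lam j - -1 * lam j'| = lam j + lam j' := by
          rw [abs_of_pos]; ring; nlinarith [hpos j, hpos j']
        linarith [this ▸ key]
      · exfalso
        have h1 := hε₁b j
        have h2 := (hpos j').le
        have : |(-1) * lam j - 1 * lam j'| = lam j + lam j' := by
          rw [abs_of_neg]; ring; nlinarith [hpos j, hpos j']
        linarith [this ▸ key]
      · refine ⟨?_, rfl⟩
        by_contra hne
        have := hε₁c j j' hne
        have : |(-1) * lam j - -1 * lam j'| = |lam j - lam j'| := by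
          rw [← abs_neg]; ring_nf
        linarith [this ▸ key, hε₁c j j' hne]
    exact Prod.ext hjj.2 (Prod.ext hjj.1 rfl)
  · exfalso
    have hKne : k - k' ≠ 0 := sub_ne_zero.mpr hkk
    have hKle : ‖k - k'‖ ≤ 10 * N₀ := hdiam k hk k' hk'
    have hKpos : (0 : ℝ) < ‖k - k'‖ := norm_pos_iff.mpr hKne
    have hmel := hMel (k - k') hKne hKle μ' μ hμ' hμ j' j
    have hdiv : γ / (10 * (N₀ : ℝ)) ^ (10 * d) ≤ γ / ‖k - k'‖ ^ (10 * d) := by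
      gcongr
    have : |zdot (k - k') ω + μ * lam j - μ' * lam j'| ≥ γ / (10 * (N₀ : ℝ)) ^ (10 * d) :=
      le_trans hdiv hmel
    linarith
end

section
/- In the setting of the Schur complement formula with A invertible, P, Q vectors with ‖P‖, ‖Q‖ ≤ 1, |ε| ≤ 1, and h = b − ε²Q A⁻¹ P ≠ 0, the operator norm of the inverse of the block matrix satisfies ‖T⁻¹‖ ≤ C (‖A⁻¹‖ + ‖A⁻¹‖² / |h| + ‖A⁻¹‖/|h| + 1/|h|) for an absolute constant C, and in particular if ‖A⁻¹‖ ≥ 1 then ‖T⁻¹‖ ≤ C(‖A⁻¹‖ + ‖A⁻¹‖²/|h|). -/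
open Matrix

/-- Operator norm of a matrix induced by the Euclidean norm. -/
noncomputable def euclOpNorm {ι : Type} [Fintype ι] [DecidableEq ι]
    (M : Matrix ι ι ℂ) : ℝ :=
  ‖Matrix.toEuclideanCLM (𝕜 := ℂ) M‖

set_option maxHeartbeats 1000000

section Aux

open scoped Matrix.Norms.L2Operator

variable {m n k l : Type} [Fintype m] [Fintype n] [Fintype k] [Fintype l]
  [DecidableEq m] [DecidableEq n] [DecidableEq k] [DecidableEq l]

lemma aux_norm_one_le : ‖(1 : Matrix n n ℂ)‖ ≤ 1 := by
  rw [Matrix.cstar_norm_def, _root_.map_one]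
  exact ContinuousLinearMap.norm_id_le

lemma aux_norm_isometry_le (J : Matrix m n ℂ) (hJ : Jᴴ * J = 1) : ‖J‖ ≤ 1 := by
  have h1 : ‖Jᴴ * J‖ = ‖J‖ * ‖J‖ := Matrix.l2_opNorm_conjTranspose_mul_self J
  rw [hJ] at h1
  nlinarith [norm_nonneg J, aux_norm_one_le (n := n)]

/-- Inclusion of the left summand. -/
noncomputable def inclL (α β : Type) [DecidableEq α] [DecidableEq β] : Matrix (α ⊕ β) α ℂ :=
  fun i j => if i = Sum.inl j then 1 else 0

/-- Inclusion of the right summand. -/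
noncomputable def inclR (α β : Type) [DecidableEq α] [DecidableEq β] : Matrix (α ⊕ β) β ℂ :=
  fun i j => if i = Sum.inr j then 1 else 0

lemma inclL_conjTranspose_mul (α β : Type) [Fintype α] [Fintype β]
    [DecidableEq α] [DecidableEq β] : (inclL α β)ᴴ * (inclL α β) = 1 := by
  ext i j
  simp [inclL, Matrix.mul_apply, Matrix.one_apply, apply_ite, eq_comm]

lemma inclR_conjTranspose_mul (α β : Type) [Fintype α] [Fintype β]
    [DecidableEq α] [DecidableEq β] : (inclR α β)ᴴ * (inclR α β) = 1 := by
  ext i j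
  simp [inclR, Matrix.mul_apply, Matrix.one_apply, apply_ite, eq_comm]

lemma inclL_norm_le (α β : Type) [Fintype α] [Fintype β] [DecidableEq α] [DecidableEq β] :
    ‖inclL α β‖ ≤ 1 :=
  aux_norm_isometry_le _ (inclL_conjTranspose_mul α β)

lemma inclR_norm_le (α β : Type) [Fintype α] [Fintype β] [DecidableEq α] [DecidableEq β] :
    ‖inclR α β‖ ≤ 1 :=
  aux_norm_isometry_le _ (inclR_conjTranspose_mul α β)

lemma aux_sandwich_norm_le {p q : Type} [Fintype p] [Fintype q] [DecidableEq p] [DecidableEq q]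
    (J : Matrix p m ℂ) (X : Matrix m n ℂ) (K : Matrix n q ℂ)
    (hJ : ‖J‖ ≤ 1) (hK : ‖K‖ ≤ 1) : ‖J * X * K‖ ≤ ‖X‖ := by
  have h1 : ‖J * X * K‖ ≤ ‖J * X‖ * ‖K‖ := Matrix.l2_opNorm_mul _ _
  have h2 : ‖J * X‖ ≤ ‖J‖ * ‖X‖ := Matrix.l2_opNorm_mul _ _
  nlinarith [norm_nonneg J, norm_nonneg K, norm_nonneg X, norm_nonneg (J * X)]

lemma pad_tl (X : Matrix m n ℂ) :
    inclL m k * X * (inclL n l)ᴴ = Matrix.fromBlocks X 0 0 0 := by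
  ext i j
  cases i <;> cases j <;>
    simp [inclL, Matrix.mul_apply, Matrix.fromBlocks, conjTranspose_apply, apply_ite]

lemma pad_tr (Y : Matrix m l ℂ) :
    inclL m k * Y * (inclR n l)ᴴ = Matrix.fromBlocks 0 Y 0 0 := by
  ext i j
  cases i <;> cases j <;>
    simp [inclL, inclR, Matrix.mul_apply, Matrix.fromBlocks, conjTranspose_apply, apply_ite]

lemma pad_bl (Z : Matrix k n ℂ) :
    inclR m k * Z * (inclL n l)ᴴ = Matrix.fromBlocks 0 0 Z 0 := by
  ext i j
  cases i <;> cases j <;>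
    simp [inclL, inclR, Matrix.mul_apply, Matrix.fromBlocks, conjTranspose_apply, apply_ite]

lemma pad_br (W : Matrix k l ℂ) :
    inclR m k * W * (inclR n l)ᴴ = Matrix.fromBlocks 0 0 0 W := by
  ext i j
  cases i <;> cases j <;>
    simp [inclR, Matrix.mul_apply, Matrix.fromBlocks, conjTranspose_apply, apply_ite]

lemma fromBlocks_norm_le (X : Matrix m n ℂ) (Y : Matrix m l ℂ)
    (Z : Matrix k n ℂ) (W : Matrix k l ℂ) :
    ‖Matrix.fromBlocks X Y Z W‖ ≤ ‖X‖ + ‖Y‖ + ‖Z‖ + ‖W‖ := by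
  have hdecomp : Matrix.fromBlocks X Y Z W =
      Matrix.fromBlocks X 0 0 0 + Matrix.fromBlocks 0 Y 0 0 +
        Matrix.fromBlocks 0 0 Z 0 + Matrix.fromBlocks 0 0 0 W := by
    simp [Matrix.fromBlocks_add]
  have h1 : ‖Matrix.fromBlocks X (0 : Matrix m l ℂ) (0 : Matrix k n ℂ) (0 : Matrix k l ℂ)‖
      ≤ ‖X‖ := by
    rw [← pad_tl]; exact aux_sandwich_norm_le _ _ _ (inclL_norm_le m k)
      (by rw [Matrix.l2_opNorm_conjTranspose]; exact inclL_norm_le n l)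
  have h2 : ‖Matrix.fromBlocks (0 : Matrix m n ℂ) Y (0 : Matrix k n ℂ) (0 : Matrix k l ℂ)‖
      ≤ ‖Y‖ := by
    rw [← pad_tr]; exact aux_sandwich_norm_le _ _ _ (inclL_norm_le m k)
      (by rw [Matrix.l2_opNorm_conjTranspose]; exact inclR_norm_le n l)
  have h3 : ‖Matrix.fromBlocks (0 : Matrix m n ℂ) (0 : Matrix m l ℂ) Z (0 : Matrix k l ℂ)‖
      ≤ ‖Z‖ := by
    rw [← pad_bl]; exact aux_sandwich_norm_le _ _ _ (inclR_norm_le m k)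
      (by rw [Matrix.l2_opNorm_conjTranspose]; exact inclL_norm_le n l)
  have h4 : ‖Matrix.fromBlocks (0 : Matrix m n ℂ) (0 : Matrix m l ℂ) (0 : Matrix k n ℂ) W‖
      ≤ ‖W‖ := by
    rw [← pad_br]; exact aux_sandwich_norm_le _ _ _ (inclR_norm_le m k)
      (by rw [Matrix.l2_opNorm_conjTranspose]; exact inclR_norm_le n l)
  rw [hdecomp]
  have t1 := norm_add_le (Matrix.fromBlocks X (0 : Matrix m l ℂ) (0 : Matrix k n ℂ) 0 +
      Matrix.fromBlocks 0 Y 0 0 + Matrix.fromBlocks 0 0 Z 0) (Matrix.fromBlocks 0 0 0 W)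
  have t2 := norm_add_le (Matrix.fromBlocks X (0 : Matrix m l ℂ) (0 : Matrix k n ℂ) 0 +
      Matrix.fromBlocks 0 Y 0 0) (Matrix.fromBlocks 0 0 Z 0)
  have t3 := norm_add_le (Matrix.fromBlocks X (0 : Matrix m l ℂ) (0 : Matrix k n ℂ) 0)
      (Matrix.fromBlocks 0 Y 0 0)
  linarith


lemma euclOpNorm_eq {ι : Type} [Fintype ι] [DecidableEq ι] (M : Matrix ι ι ℂ) :
    euclOpNorm M = ‖M‖ := rfl

lemma col_norm_le (n : ℕ) (P : Fin n → ℂ) (Pc : Matrix (Fin n) (Fin 1) ℂ)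
    (hPc : Pc = fun i _ => P i)
    (hP1 : ‖(WithLp.equiv 2 (Fin n → ℂ)).symm P‖ ≤ 1) : ‖Pc‖ ≤ 1 := by
  have hmul : Pcᴴ * Pc = ((‖(WithLp.equiv 2 (Fin n → ℂ)).symm P‖ : ℂ) ^ 2) • 1 := by
    replace hPc : Pc = Matrix.of fun i _ => P i := hPc
    subst hPc
    have hP : (‖(WithLp.equiv 2 (Fin n → ℂ)).symm P‖ : ℝ) ^ 2 = ∑ i, ‖P i‖ ^ 2 := by
      rw [EuclideanSpace.norm_eq, Real.sq_sqrt (by positivity)]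
      rfl
    ext i j
    fin_cases i; fin_cases j
    simp only [Matrix.mul_apply, Matrix.one_apply, conjTranspose_apply, smul_eq_mul,
      if_pos rfl, mul_one, Matrix.of_apply]
    have h2 : ∀ x : Fin n, star (P x) * P x = ((‖P x‖ ^ 2 : ℝ) : ℂ) := by
      intro x
      push_cast
      exact RCLike.conj_mul (P x)
    simp only [h2]
    rw [← Complex.ofReal_pow, hP]
    push_cast
    simp [Matrix.one_apply]
  have key : ‖Pcᴴ * Pc‖ = ‖Pc‖ * ‖Pc‖ := Matrix.l2_opNorm_conjTranspose_mul_self Pc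
  rw [hmul, norm_smul] at key
  have h1 : ‖((‖(WithLp.equiv 2 (Fin n → ℂ)).symm P‖ : ℂ) ^ 2)‖ ≤ 1 := by
    rw [norm_pow, Complex.norm_real, Real.norm_of_nonneg (norm_nonneg _)]
    nlinarith [norm_nonneg ((WithLp.equiv 2 (Fin n → ℂ)).symm P)]
  nlinarith [norm_nonneg Pc, aux_norm_one_le (n := Fin 1),
    norm_nonneg ((‖(WithLp.equiv 2 (Fin n → ℂ)).symm P‖ : ℂ) ^ 2),
    norm_nonneg ((1 : Matrix (Fin 1) (Fin 1) ℂ))]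

lemma row_norm_le (n : ℕ) (Q : Fin n → ℂ) (Qr : Matrix (Fin 1) (Fin n) ℂ)
    (hQr : Qr = fun _ j => Q j)
    (hQ1 : ‖(WithLp.equiv 2 (Fin n → ℂ)).symm Q‖ ≤ 1) : ‖Qr‖ ≤ 1 := by
  have h := col_norm_le n (fun j => star (Q j)) Qrᴴ (by
    replace hQr : Qr = Matrix.of fun _ j => Q j := hQr
    subst hQr; ext i j; simp [conjTranspose_apply]) (by
      have : ‖(WithLp.equiv 2 (Fin n → ℂ)).symm (fun j => star (Q j))‖ =
          ‖(WithLp.equiv 2 (Fin n → ℂ)).symm Q‖ := by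
        rw [EuclideanSpace.norm_eq, EuclideanSpace.norm_eq]
        congr 1
        exact Finset.sum_congr rfl fun i _ => by simp [norm_star]
      rw [this]; exact hQ1)
  rwa [Matrix.l2_opNorm_conjTranspose] at h

lemma schur_norm_master (n : ℕ) (B : Matrix (Fin n) (Fin n) ℂ) (P Q : Fin n → ℂ) (ε h : ℂ)
    (Pc : Matrix (Fin n) (Fin 1) ℂ) (Qr : Matrix (Fin 1) (Fin n) ℂ)
    (hPc : Pc = fun i _ => P i) (hQr : Qr = fun _ j => Q j)
    (hP1 : ‖(WithLp.equiv 2 (Fin n → ℂ)).symm P‖ ≤ 1)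
    (hQ1 : ‖(WithLp.equiv 2 (Fin n → ℂ)).symm Q‖ ≤ 1)
    (hε : ‖ε‖ ≤ 1) :
    euclOpNorm (Matrix.fromBlocks (B + (ε ^ 2 * h⁻¹) • (B * (Pc * (Qr * B))))
        ((-(ε * h⁻¹)) • (B * Pc)) ((-(ε * h⁻¹)) • (Qr * B))
        (h⁻¹ • (1 : Matrix (Fin 1) (Fin 1) ℂ))) ≤
      euclOpNorm B + ‖h‖⁻¹ * (euclOpNorm B * euclOpNorm B) +
        2 * (‖h‖⁻¹ * euclOpNorm B) + ‖h‖⁻¹ := by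
  rw [euclOpNorm_eq]
  have ea : euclOpNorm B = ‖B‖ := rfl
  rw [ea]
  have hPc1 : ‖Pc‖ ≤ 1 := col_norm_le n P Pc hPc hP1
  have hQr1 : ‖Qr‖ ≤ 1 := row_norm_le n Q Qr hQr hQ1
  have hone : ‖(1 : Matrix (Fin 1) (Fin 1) ℂ)‖ ≤ 1 := aux_norm_one_le
  have hinv : (0 : ℝ) ≤ ‖h‖⁻¹ := by positivity
  have hBP : ‖B * Pc‖ ≤ ‖B‖ := by
    have := Matrix.l2_opNorm_mul B Pc
    nlinarith [norm_nonneg B, norm_nonneg Pc]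
  have hQB : ‖Qr * B‖ ≤ ‖B‖ := by
    have := Matrix.l2_opNorm_mul Qr B
    nlinarith [norm_nonneg B, norm_nonneg Qr]
  have hPQ : ‖Pc * (Qr * B)‖ ≤ ‖B‖ := by
    have h2 := Matrix.l2_opNorm_mul Pc (Qr * B)
    nlinarith [norm_nonneg Pc, norm_nonneg (Qr * B), norm_nonneg B]
  have hMid : ‖B * (Pc * (Qr * B))‖ ≤ ‖B‖ * ‖B‖ := by
    have h1 := Matrix.l2_opNorm_mul B (Pc * (Qr * B))
    nlinarith [norm_nonneg B, norm_nonneg (Pc * (Qr * B))]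
  have hε2 : ‖ε ^ 2 * h⁻¹‖ ≤ ‖h‖⁻¹ := by
    rw [norm_mul, norm_pow, norm_inv]
    have he2 : ‖ε‖ ^ 2 ≤ 1 := pow_le_one₀ (norm_nonneg ε) hε
    calc ‖ε‖ ^ 2 * ‖h‖⁻¹ ≤ 1 * ‖h‖⁻¹ := mul_le_mul_of_nonneg_right he2 hinv
      _ = ‖h‖⁻¹ := one_mul _
  have hεh : ‖-(ε * h⁻¹)‖ ≤ ‖h‖⁻¹ := by
    rw [norm_neg, norm_mul, norm_inv]
    calc ‖ε‖ * ‖h‖⁻¹ ≤ 1 * ‖h‖⁻¹ := mul_le_mul_of_nonneg_right hε hinv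
      _ = ‖h‖⁻¹ := one_mul _
  have hX : ‖B + (ε ^ 2 * h⁻¹) • (B * (Pc * (Qr * B)))‖ ≤ ‖B‖ + ‖h‖⁻¹ * (‖B‖ * ‖B‖) := by
    refine (norm_add_le _ _).trans ?_
    rw [norm_smul]
    nlinarith [norm_nonneg (B * (Pc * (Qr * B))), norm_nonneg (ε ^ 2 * h⁻¹),
      norm_nonneg B]
  have hY : ‖(-(ε * h⁻¹)) • (B * Pc)‖ ≤ ‖h‖⁻¹ * ‖B‖ := by
    rw [norm_smul]
    nlinarith [norm_nonneg (B * Pc), norm_nonneg (-(ε * h⁻¹))]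
  have hZ : ‖(-(ε * h⁻¹)) • (Qr * B)‖ ≤ ‖h‖⁻¹ * ‖B‖ := by
    rw [norm_smul]
    nlinarith [norm_nonneg (Qr * B), norm_nonneg (-(ε * h⁻¹))]
  have hW : ‖h⁻¹ • (1 : Matrix (Fin 1) (Fin 1) ℂ)‖ ≤ ‖h‖⁻¹ := by
    rw [norm_smul, norm_inv]
    nlinarith [norm_nonneg (1 : Matrix (Fin 1) (Fin 1) ℂ)]
  have hblocks := fromBlocks_norm_le (B + (ε ^ 2 * h⁻¹) • (B * (Pc * (Qr * B))))
    ((-(ε * h⁻¹)) • (B * Pc)) ((-(ε * h⁻¹)) • (Qr * B))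
    (h⁻¹ • (1 : Matrix (Fin 1) (Fin 1) ℂ))
  linarith

end Aux



lemma schur_inv_formula (n : ℕ) (A : Matrix (Fin n) (Fin n) ℂ) (P Q : Fin n → ℂ) (b ε : ℂ)
    (Pc : Matrix (Fin n) (Fin 1) ℂ) (Qr : Matrix (Fin 1) (Fin n) ℂ) (h : ℂ)
    (hdet : IsUnit A.det)
    (hPc : Pc = (fun i _ => P i)) (hQr : Qr = (fun _ j => Q j))
    (hh : h = b - ε ^ 2 * (Q ⬝ᵥ A⁻¹.mulVec P)) (hne : h ≠ 0) :
    (Matrix.fromBlocks A (ε • Pc) (ε • Qr) (fun _ _ => b))⁻¹ =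
      Matrix.fromBlocks
        (A⁻¹ + (ε ^ 2 * h⁻¹) • (A⁻¹ * (Pc * (Qr * A⁻¹))))
        ((-(ε * h⁻¹)) • (A⁻¹ * Pc))
        ((-(ε * h⁻¹)) • (Qr * A⁻¹))
        (h⁻¹ • (1 : Matrix (Fin 1) (Fin 1) ℂ)) := by
  set B := A⁻¹ with hB
  have hAB : A * B = 1 := Matrix.mul_nonsing_inv A hdet
  set s : ℂ := Q ⬝ᵥ A⁻¹.mulVec P with hs
  have key : Qr * B * Pc = s • (1 : Matrix (Fin 1) (Fin 1) ℂ) := by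
    replace hPc : Pc = Matrix.of fun i _ => P i := hPc
    replace hQr : Qr = Matrix.of fun _ j => Q j := hQr
    subst hPc hQr
    ext i j
    fin_cases i; fin_cases j
    simp only [Matrix.mul_apply, hs, dotProduct, Matrix.mulVec, smul_eq_mul,
      Matrix.one_apply_eq, mul_one, Matrix.smul_apply, Matrix.of_apply]
    rw [← hB]
    simp only [Finset.sum_mul, Finset.mul_sum]
    rw [Finset.sum_comm]
    exact Finset.sum_congr rfl fun j _ => Finset.sum_congr rfl fun x _ => by ring
  have hDb : (fun _ _ => b : Matrix (Fin 1) (Fin 1) ℂ) =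
      (b • (1 : Matrix (Fin 1) (Fin 1) ℂ)) := by
    ext i j
    fin_cases i; fin_cases j
    simp [Matrix.one_apply]
  apply Matrix.inv_eq_right_inv
  rw [hDb, Matrix.fromBlocks_multiply, ← Matrix.fromBlocks_one, Matrix.fromBlocks_inj]
  have hs' : ε ^ 2 * s = b - h := by rw [hh]; ring
  refine ⟨?_, ?_, ?_, ?_⟩ <;>
    simp only [Matrix.mul_add, Matrix.add_mul, Matrix.mul_smul, Matrix.smul_mul, smul_smul,
      ← Matrix.mul_assoc, hAB, Matrix.one_mul, Matrix.mul_one, key] <;>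
    match_scalars <;>
    field_simp <;>
    first
      | ring1
      | linear_combination hs'
      | linear_combination -hs'
      | linear_combination ε * hs'
      | linear_combination -ε * hs'
      | linear_combination (ε - h) * hs'
      | linear_combination h * hs'
      | linear_combination -h * hs'
      | linear_combination (h - ε) * hs'

/-- Norm bound for the inverse of the block matrix `T = (A, εP; εQ, b)` with a
one-dimensional lower-right block, via the Schur complement `h = b − ε² Q A⁻¹ P`. -/
theorem schur_inverse_norm_bound :
    ∃ C : ℝ, 0 < C ∧
      ∀ (n : ℕ) (A : Matrix (Fin n) (Fin n) ℂ) (P Q : Fin n → ℂ) (b ε : ℂ)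
        (Pc : Matrix (Fin n) (Fin 1) ℂ) (Qr : Matrix (Fin 1) (Fin n) ℂ) (h : ℂ),
        IsUnit A.det →
        Pc = (fun i _ => P i) → Qr = (fun _ j => Q j) →
        ‖(WithLp.equiv 2 (Fin n → ℂ)).symm P‖ ≤ 1 →
        ‖(WithLp.equiv 2 (Fin n → ℂ)).symm Q‖ ≤ 1 →
        ‖ε‖ ≤ 1 →
        h = b - ε ^ 2 * (Q ⬝ᵥ A⁻¹.mulVec P) → h ≠ 0 →
        euclOpNorm (Matrix.fromBlocks A (ε • Pc) (ε • Qr) (fun _ _ => b))⁻¹ ≤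
            C * (euclOpNorm A⁻¹ + euclOpNorm A⁻¹ ^ 2 / ‖h‖ +
              euclOpNorm A⁻¹ / ‖h‖ + 1 / ‖h‖) ∧
          (1 ≤ euclOpNorm A⁻¹ →
            euclOpNorm (Matrix.fromBlocks A (ε • Pc) (ε • Qr) (fun _ _ => b))⁻¹ ≤
              C * (euclOpNorm A⁻¹ + euclOpNorm A⁻¹ ^ 2 / ‖h‖)) := by
  refine ⟨4, by norm_num, ?_⟩
  intro n A P Q b ε Pc Qr h hdet hPc hQr hP1 hQ1 hε hh hne
  have hinv := schur_inv_formula n A P Q b ε Pc Qr h hdet hPc hQr hh hne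
  rw [hinv]
  have hbound := schur_norm_master n A⁻¹ P Q ε h Pc Qr hPc hQr hP1 hQ1 hε
  set a := euclOpNorm A⁻¹ with ha
  have ha0 : 0 ≤ a := norm_nonneg _
  have hh0 : 0 < ‖h‖ := norm_pos_iff.mpr hne
  have hinv0 : 0 ≤ ‖h‖⁻¹ := by positivity
  have hdiv : ∀ x : ℝ, x / ‖h‖ = ‖h‖⁻¹ * x := fun x => by
    rw [div_eq_mul_inv, mul_comm]
  constructor
  · refine hbound.trans ?_
    simp only [div_eq_mul_inv, pow_two]
    nlinarith [mul_nonneg hinv0 (mul_nonneg ha0 ha0), mul_nonneg hinv0 ha0]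
  · intro h1a
    refine hbound.trans ?_
    simp only [div_eq_mul_inv, pow_two]
    nlinarith [mul_nonneg hinv0 (mul_nonneg ha0 ha0), mul_nonneg hinv0 ha0,
      mul_le_mul_of_nonneg_left h1a hinv0,
      mul_le_mul_of_nonneg_left h1a (mul_nonneg hinv0 ha0)]
end
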